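/- For every positive integer m, the sum Σ_{k=0}^{m} C(m,k) (k/m)^k (1 − k/m)^{m−k} is at most 2√m. -/

import Mathlib

open Real Finset Stirling Nat

private lemma stirling_pos' (n : ℕ) (hn : 1 ≤ n) : 0 < stirlingSeq n := by
  obtain ⟨k, rfl⟩ := Nat.exists_eq_add_of_le hn
  rw [add_comm]; exact stirlingSeq'_pos k

private lemma stirling_lower (n : ℕ) (hn : 1 ≤ n) : Real.sqrt π ≤ stirlingSeq n := by
  obtain ⟨k, rfl⟩ := Nat.exists_eq_add_of_le hn
  have h : Filter.Tendsto (stirlingSeq ∘ Nat.succ) Filter.atTop (nhds (Real.sqrt π)) :=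
    tendsto_stirlingSeq_sqrt_pi.comp (Filter.tendsto_add_atTop_nat 1)
  have := stirlingSeq'_antitone.le_of_tendsto h k
  simpa [Nat.succ_eq_add_one, add_comm] using this

private lemma stirling_anti {a b : ℕ} (ha : 1 ≤ a) (hab : a ≤ b) :
    stirlingSeq b ≤ stirlingSeq a := by
  obtain ⟨a', rfl⟩ := Nat.exists_eq_add_of_le ha
  obtain ⟨b', rfl⟩ : ∃ b', b = 1 + b' := Nat.exists_eq_add_of_le (ha.trans hab)
  have : a' ≤ b' := by omega
  have := stirlingSeq'_antitone this
  simpa [Nat.succ_eq_add_one, add_comm] using this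

private lemma fact_eq (n : ℕ) (hn : 1 ≤ n) :
    (n ! : ℝ) = stirlingSeq n * (Real.sqrt (2*n) * ((n:ℝ)/Real.exp 1)^n) := by
  have h1 : (0:ℝ) < Real.sqrt (2*n) := by rw [Real.sqrt_pos]; positivity
  have h2 : (0:ℝ) < ((n:ℝ)/Real.exp 1)^n := by positivity
  rw [stirlingSeq]; field_simp

private lemma term_bound (k m : ℕ) (hk : 1 ≤ k) (hkm : k < m) :
    (m.choose k : ℝ) * ((k:ℝ)/m)^k * (1 - (k:ℝ)/m)^(m-k)
      ≤ Real.sqrt m / (Real.sqrt (2*π) * (Real.sqrt k * Real.sqrt (m-k : ℕ))) := by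
  obtain ⟨b, rfl⟩ : ∃ b, m = k + b := ⟨m - k, by omega⟩
  have hb : 1 ≤ b := by omega
  have hcast : ((k + b : ℕ) : ℝ) = (k:ℝ) + b := by push_cast; ring
  have hc0 : (0:ℝ) < ((k+b : ℕ):ℝ) := by positivity
  have hk0 : (0:ℝ) < (k:ℝ) := by positivity
  have hb0 : (0:ℝ) < (b:ℝ) := by positivity
  have hsub : k + b - k = b := by omega
  rw [hsub]
  have h1 : 1 - (k:ℝ)/((k+b:ℕ):ℝ) = (b:ℝ)/((k+b:ℕ):ℝ) := by
    rw [hcast]; field_simp; ring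
  rw [h1, Nat.cast_choose ℝ (show k ≤ k + b by omega), hsub]
  have hid : ((k+b)! : ℝ) / ((k ! : ℝ) * (b ! : ℝ)) * ((k:ℝ)/((k+b:ℕ):ℝ))^k * ((b:ℝ)/((k+b:ℕ):ℝ))^b
      = stirlingSeq (k+b) / (stirlingSeq k * stirlingSeq b)
        * (Real.sqrt (2*((k+b:ℕ):ℝ)) / (Real.sqrt (2*k) * Real.sqrt (2*b))) := by
    rw [fact_eq (k+b) (by omega), fact_eq k hk, fact_eq b hb]
    have e1 : (0:ℝ) < Real.sqrt (2*((k+b:ℕ):ℝ)) := by rw [Real.sqrt_pos]; positivity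
    have e2 : (0:ℝ) < Real.sqrt (2*(k:ℝ)) := by rw [Real.sqrt_pos]; positivity
    have e3 : (0:ℝ) < Real.sqrt (2*(b:ℝ)) := by rw [Real.sqrt_pos]; positivity
    have e4 : (0:ℝ) < Real.exp 1 := Real.exp_pos 1
    have e5 := stirling_pos' k hk
    have e6 := stirling_pos' b hb
    have e7 := stirling_pos' (k+b) (by omega : 1 ≤ k + b)
    rw [hcast]
    field_simp [Real.exp_add]
    have hkb : (k:ℝ) + b ≠ 0 := by positivity
    simp only [pow_add, div_pow]
    field_simp
  rw [hid]
  have hkey : stirlingSeq (k+b) / (stirlingSeq k * stirlingSeq b) ≤ 1 / Real.sqrt π := by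
    rw [div_le_div_iff₀ (mul_pos (stirling_pos' k hk) (stirling_pos' b hb))
      (Real.sqrt_pos.mpr pi_pos)]
    calc stirlingSeq (k+b) * Real.sqrt π ≤ stirlingSeq k * stirlingSeq b := by
          apply mul_le_mul (stirling_anti hk (by omega)) (stirling_lower b hb)
            (Real.sqrt_nonneg _) (stirling_pos' k hk).le
      _ = 1 * (stirlingSeq k * stirlingSeq b) := by ring
  have hQ : (0:ℝ) ≤ Real.sqrt (2*((k+b:ℕ):ℝ)) / (Real.sqrt (2*k) * Real.sqrt (2*b)) := by
    positivity
  calc stirlingSeq (k+b) / (stirlingSeq k * stirlingSeq b)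
        * (Real.sqrt (2*((k+b:ℕ):ℝ)) / (Real.sqrt (2*k) * Real.sqrt (2*b)))
      ≤ 1 / Real.sqrt π * (Real.sqrt (2*((k+b:ℕ):ℝ)) / (Real.sqrt (2*k) * Real.sqrt (2*b))) :=
        mul_le_mul_of_nonneg_right hkey hQ
    _ = Real.sqrt ((k+b:ℕ)) / (Real.sqrt (2*π) * (Real.sqrt k * Real.sqrt (b:ℕ))) := by
        rw [Real.sqrt_mul (by norm_num : (0:ℝ) ≤ 2) ((k+b:ℕ):ℝ),
            Real.sqrt_mul (by norm_num : (0:ℝ) ≤ 2) (k:ℝ),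
            Real.sqrt_mul (by norm_num : (0:ℝ) ≤ 2) (b:ℝ),
            Real.sqrt_mul (by norm_num : (0:ℝ) ≤ 2) π]
        have h2 : Real.sqrt 2 * Real.sqrt 2 = 2 := Real.mul_self_sqrt (by norm_num)
        have hπ : (0:ℝ) < Real.sqrt π := Real.sqrt_pos.mpr pi_pos
        have hsk : (0:ℝ) < Real.sqrt k := Real.sqrt_pos.mpr hk0
        have hsb : (0:ℝ) < Real.sqrt b := Real.sqrt_pos.mpr hb0
        have hs2 : (0:ℝ) < Real.sqrt 2 := by positivity
        field_simp


private lemma sum_one_div_sqrt (n : ℕ) (hn : 1 ≤ n) :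
    ∑ j ∈ Finset.Ico 1 (n+1), 1/Real.sqrt j ≤ 2*Real.sqrt n - 1 := by
  induction n, hn using Nat.le_induction with
  | base => simp; norm_num
  | succ n hn ih =>
    rw [Finset.sum_Ico_succ_top (by omega)]
    have hx : Real.sqrt n ^ 2 = n := Real.sq_sqrt (by positivity)
    have hy : Real.sqrt (n+1:ℕ) ^ 2 = (n:ℝ)+1 := by
      rw [Real.sq_sqrt (by positivity)]; push_cast; ring
    have hy0 : (0:ℝ) < Real.sqrt (n+1:ℕ) := Real.sqrt_pos.mpr (by positivity)
    have hx0 : (0:ℝ) ≤ Real.sqrt n := Real.sqrt_nonneg _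
    have key : 1/Real.sqrt (n+1:ℕ) ≤ 2*Real.sqrt (n+1:ℕ) - 2*Real.sqrt n := by
      rw [div_le_iff₀ hy0]
      nlinarith [sq_nonneg (Real.sqrt (n+1:ℕ) - Real.sqrt n)]
    push_cast at *
    linarith

private lemma sum_split (m : ℕ) (hm : 5 ≤ m) :
    ∑ k ∈ Finset.Ico 1 m, 1/(Real.sqrt k * Real.sqrt ((m-k : ℕ):ℝ))
      ≤ 4 - 2.82/Real.sqrt m := by
  have hm0 : (0:ℝ) < Real.sqrt m := Real.sqrt_pos.mpr (by positivity)
  set h := m/2 with hh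
  have h1 : 1 ≤ h := by omega
  have h2 : h + 1 ≤ m := by omega
  rw [← Finset.sum_Ico_consecutive _ (show 1 ≤ h+1 by omega) h2]
  have bound1 : ∑ k ∈ Finset.Ico 1 (h+1), 1/(Real.sqrt k * Real.sqrt ((m-k : ℕ):ℝ))
      ≤ 2 - 1.41/Real.sqrt m := by
    have step : ∀ k ∈ Finset.Ico 1 (h+1), 1/(Real.sqrt k * Real.sqrt ((m-k : ℕ):ℝ))
        ≤ Real.sqrt 2/Real.sqrt m * (1/Real.sqrt k) := by
      intro k hk
      simp only [Finset.mem_Ico] at hk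
      have hk1 : 1 ≤ k := hk.1
      have hkh : k ≤ h := by omega
      have hmk : 1 ≤ m - k := by omega
      have hsm : Real.sqrt m ≤ Real.sqrt 2 * Real.sqrt ((m-k : ℕ):ℝ) := by
        rw [← Real.sqrt_mul (by norm_num)]
        apply Real.sqrt_le_sqrt
        have : m ≤ 2 * (m - k) := by omega
        calc (m:ℝ) ≤ ((2*(m-k):ℕ):ℝ) := by exact_mod_cast this
          _ = 2 * ((m-k:ℕ):ℝ) := by push_cast; ring
      have hsk : (0:ℝ) < Real.sqrt k :=
        Real.sqrt_pos.mpr (by exact_mod_cast (by omega : 0 < k))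
      have hsmk : (0:ℝ) < Real.sqrt ((m-k:ℕ):ℝ) :=
        Real.sqrt_pos.mpr (by exact_mod_cast (by omega : 0 < m - k))
      rw [show Real.sqrt 2/Real.sqrt m * (1/Real.sqrt k)
            = Real.sqrt 2/(Real.sqrt m * Real.sqrt k) by ring,
        div_le_div_iff₀ (by positivity) (by positivity)]
      calc 1 * (Real.sqrt m * Real.sqrt k)
          ≤ 1 * ((Real.sqrt 2 * Real.sqrt ((m-k:ℕ):ℝ)) * Real.sqrt k) := by
            apply mul_le_mul_of_nonneg_left _ (by norm_num)
            exact mul_le_mul_of_nonneg_right hsm hsk.le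
        _ = Real.sqrt 2 * (Real.sqrt k * Real.sqrt ((m-k:ℕ):ℝ)) := by ring
    calc ∑ k ∈ Finset.Ico 1 (h+1), 1/(Real.sqrt k * Real.sqrt ((m-k : ℕ):ℝ))
        ≤ ∑ k ∈ Finset.Ico 1 (h+1), Real.sqrt 2/Real.sqrt m * (1/Real.sqrt k) :=
          Finset.sum_le_sum step
      _ = Real.sqrt 2/Real.sqrt m * ∑ k ∈ Finset.Ico 1 (h+1), 1/Real.sqrt k := by
          rw [Finset.mul_sum]
      _ ≤ Real.sqrt 2/Real.sqrt m * (2*Real.sqrt h - 1) := by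
          apply mul_le_mul_of_nonneg_left (sum_one_div_sqrt h h1) (by positivity)
      _ ≤ 2 - 1.41/Real.sqrt m := by
          have e1 : Real.sqrt 2 * (2*Real.sqrt h - 1) = 2*Real.sqrt (2*h) - Real.sqrt 2 := by
            rw [Real.sqrt_mul (by norm_num)]; ring
          have e2 : Real.sqrt (2*(h:ℝ)) ≤ Real.sqrt m := by
            apply Real.sqrt_le_sqrt
            have : 2*h ≤ m := by omega
            calc (2:ℝ)*(h:ℝ) = ((2*h:ℕ):ℝ) := by push_cast; ring
              _ ≤ (m:ℝ) := by exact_mod_cast this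
          have e3 : (1.41:ℝ) ≤ Real.sqrt 2 := by
            rw [show (1.41:ℝ) = Real.sqrt (1.41^2) by
              rw [Real.sqrt_sq (by norm_num)]]
            apply Real.sqrt_le_sqrt; norm_num
          rw [div_mul_eq_mul_div, div_le_iff₀ hm0, e1]
          have e4 : (2 - 1.41/Real.sqrt m) * Real.sqrt m = 2*Real.sqrt m - 1.41 := by
            field_simp
          rw [e4]
          linarith
  have bound2 : ∑ k ∈ Finset.Ico (h+1) m, 1/(Real.sqrt k * Real.sqrt ((m-k : ℕ):ℝ))
      ≤ 2 - 1.41/Real.sqrt m := by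
    have step : ∀ k ∈ Finset.Ico (h+1) m, 1/(Real.sqrt k * Real.sqrt ((m-k : ℕ):ℝ))
        ≤ Real.sqrt 2/Real.sqrt m * (1/Real.sqrt ((m-k:ℕ):ℝ)) := by
      intro k hk
      simp only [Finset.mem_Ico] at hk
      have hk1 : h+1 ≤ k := hk.1
      have hkm : k < m := hk.2
      have hmk : 1 ≤ m - k := by omega
      have hsm : Real.sqrt m ≤ Real.sqrt 2 * Real.sqrt (k:ℝ) := by
        rw [← Real.sqrt_mul (by norm_num)]
        apply Real.sqrt_le_sqrt
        have : m ≤ 2 * k := by omega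
        calc (m:ℝ) ≤ ((2*k:ℕ):ℝ) := by exact_mod_cast this
          _ = 2 * (k:ℝ) := by push_cast; ring
      have hsk : (0:ℝ) < Real.sqrt k :=
        Real.sqrt_pos.mpr (by exact_mod_cast (by omega : 0 < k))
      have hsmk : (0:ℝ) < Real.sqrt ((m-k:ℕ):ℝ) :=
        Real.sqrt_pos.mpr (by exact_mod_cast (by omega : 0 < m - k))
      rw [show Real.sqrt 2/Real.sqrt m * (1/Real.sqrt ((m-k:ℕ):ℝ))
            = Real.sqrt 2/(Real.sqrt m * Real.sqrt ((m-k:ℕ):ℝ)) by ring,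
        div_le_div_iff₀ (by positivity) (by positivity)]
      calc 1 * (Real.sqrt m * Real.sqrt ((m-k:ℕ):ℝ))
          ≤ 1 * ((Real.sqrt 2 * Real.sqrt (k:ℝ)) * Real.sqrt ((m-k:ℕ):ℝ)) := by
            apply mul_le_mul_of_nonneg_left _ (by norm_num)
            exact mul_le_mul_of_nonneg_right hsm hsmk.le
        _ = Real.sqrt 2 * (Real.sqrt k * Real.sqrt ((m-k:ℕ):ℝ)) := by ring
    have hrefl : ∑ k ∈ Finset.Ico (h+1) m, 1/Real.sqrt ((m-k:ℕ):ℝ)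
        = ∑ j ∈ Finset.Ico 1 (m-h), 1/Real.sqrt (j:ℝ) := by
      have := Finset.sum_Ico_reflect (fun j => 1/Real.sqrt (j:ℝ)) (h+1) (show m ≤ m+1 by omega)
      rw [this]
      have e1 : m + 1 - m = 1 := by omega
      have e2 : m + 1 - (h+1) = m - h := by omega
      rw [e1, e2]
    have hn' : 1 ≤ m - h - 1 := by omega
    have hico : Finset.Ico 1 (m-h) = Finset.Ico 1 ((m-h-1)+1) := by congr 1; omega
    calc ∑ k ∈ Finset.Ico (h+1) m, 1/(Real.sqrt k * Real.sqrt ((m-k : ℕ):ℝ))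
        ≤ ∑ k ∈ Finset.Ico (h+1) m, Real.sqrt 2/Real.sqrt m * (1/Real.sqrt ((m-k:ℕ):ℝ)) :=
          Finset.sum_le_sum step
      _ = Real.sqrt 2/Real.sqrt m * ∑ k ∈ Finset.Ico (h+1) m, 1/Real.sqrt ((m-k:ℕ):ℝ) := by
          rw [Finset.mul_sum]
      _ ≤ Real.sqrt 2/Real.sqrt m * (2*Real.sqrt (m-h-1:ℕ) - 1) := by
          apply mul_le_mul_of_nonneg_left _ (by positivity)
          rw [hrefl, hico]
          exact sum_one_div_sqrt (m-h-1) hn'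
      _ ≤ 2 - 1.41/Real.sqrt m := by
          have e1 : Real.sqrt 2 * (2*Real.sqrt (m-h-1:ℕ) - 1)
              = 2*Real.sqrt (2*((m-h-1:ℕ):ℝ)) - Real.sqrt 2 := by
            rw [Real.sqrt_mul (by norm_num)]; ring
          have e2 : Real.sqrt (2*((m-h-1:ℕ):ℝ)) ≤ Real.sqrt m := by
            apply Real.sqrt_le_sqrt
            have : 2*(m-h-1) ≤ m := by omega
            calc (2:ℝ)*((m-h-1:ℕ):ℝ) = ((2*(m-h-1):ℕ):ℝ) := by push_cast; ring
              _ ≤ (m:ℝ) := by exact_mod_cast this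
          have e3 : (1.41:ℝ) ≤ Real.sqrt 2 := by
            rw [show (1.41:ℝ) = Real.sqrt (1.41^2) by
              rw [Real.sqrt_sq (by norm_num)]]
            apply Real.sqrt_le_sqrt; norm_num
          rw [div_mul_eq_mul_div, div_le_iff₀ hm0, e1]
          have e4 : (2 - 1.41/Real.sqrt m) * Real.sqrt m = 2*Real.sqrt m - 1.41 := by
            field_simp
          rw [e4]
          linarith
  have hsplit : (2.82:ℝ)/Real.sqrt m = 1.41/Real.sqrt m + 1.41/Real.sqrt m := by ring
  linarith

/-- For every positive integer `m`,
`Σ_{k=0}^{m} C(m,k) (k/m)^k (1 − k/m)^{m−k} ≤ 2√m`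
(with the convention `0^0 = 1`, which is the real-number convention). -/
theorem xi_le_two_sqrt (m : ℕ) (hm : 0 < m) :
    ∑ k ∈ Finset.range (m + 1),
        (m.choose k : ℝ) * ((k : ℝ) / m) ^ k * (1 - (k : ℝ) / m) ^ (m - k)
      ≤ 2 * Real.sqrt m := by
  rcases lt_or_ge m 5 with h5 | h5
  · interval_cases m
    · have hc : (1:ℝ) ≤ Real.sqrt 1 := by rw [Real.sqrt_one]
      rw [Finset.sum_range_succ, Finset.sum_range_succ]
      norm_num [Nat.choose] <;> linarith
    · have hc : (1.25:ℝ) ≤ Real.sqrt 2 :=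
        (Real.le_sqrt (by norm_num) (by norm_num)).mpr (by norm_num)
      rw [Finset.sum_range_succ, Finset.sum_range_succ, Finset.sum_range_succ]
      norm_num [Nat.choose]
      linarith
    · have hc : (1.445:ℝ) ≤ Real.sqrt 3 :=
        (Real.le_sqrt (by norm_num) (by norm_num)).mpr (by norm_num)
      rw [Finset.sum_range_succ, Finset.sum_range_succ, Finset.sum_range_succ,
        Finset.sum_range_succ]
      norm_num [Nat.choose]
      linarith
    · have hc : (2:ℝ) ≤ Real.sqrt 4 :=
        (Real.le_sqrt (by norm_num) (by norm_num)).mpr (by norm_num)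
      rw [Finset.sum_range_succ, Finset.sum_range_succ, Finset.sum_range_succ,
        Finset.sum_range_succ, Finset.sum_range_succ]
      norm_num [Nat.choose]
  · -- main case : m ≥ 5
    have hm0 : (0:ℝ) < (m:ℝ) := by positivity
    have hs0 : (0:ℝ) < Real.sqrt m := Real.sqrt_pos.mpr hm0
    have hu0 : (0:ℝ) < Real.sqrt (2*π) := Real.sqrt_pos.mpr (by positivity)
    rw [Finset.sum_range_succ, Finset.range_eq_Ico, Finset.sum_eq_sum_Ico_succ_bot hm]
    have middle : ∑ k ∈ Finset.Ico 1 m,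
          (m.choose k : ℝ) * ((k:ℝ)/m)^k * (1 - (k:ℝ)/m)^(m-k)
        ≤ Real.sqrt m / Real.sqrt (2*π) * (4 - 2.82/Real.sqrt m) := by
      calc ∑ k ∈ Finset.Ico 1 m, (m.choose k : ℝ) * ((k:ℝ)/m)^k * (1 - (k:ℝ)/m)^(m-k)
          ≤ ∑ k ∈ Finset.Ico 1 m,
              Real.sqrt m / Real.sqrt (2*π) * (1/(Real.sqrt k * Real.sqrt ((m-k:ℕ):ℝ))) := by
            apply Finset.sum_le_sum
            intro k hk
            simp only [Finset.mem_Ico] at hk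
            have := term_bound k m hk.1 hk.2
            calc (m.choose k : ℝ) * ((k:ℝ)/m)^k * (1 - (k:ℝ)/m)^(m-k)
                ≤ Real.sqrt m / (Real.sqrt (2*π) * (Real.sqrt k * Real.sqrt ((m-k:ℕ):ℝ))) := this
              _ = Real.sqrt m / Real.sqrt (2*π) * (1/(Real.sqrt k * Real.sqrt ((m-k:ℕ):ℝ))) := by
                  ring
        _ = Real.sqrt m / Real.sqrt (2*π)
              * ∑ k ∈ Finset.Ico 1 m, 1/(Real.sqrt k * Real.sqrt ((m-k:ℕ):ℝ)) := by
            rw [Finset.mul_sum]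
        _ ≤ Real.sqrt m / Real.sqrt (2*π) * (4 - 2.82/Real.sqrt m) := by
            apply mul_le_mul_of_nonneg_left (sum_split m h5) (by positivity)
    have hend0 : (m.choose 0 : ℝ) * (((0:ℕ):ℝ)/m) ^ (0:ℕ) * (1 - ((0:ℕ):ℝ)/m) ^ (m - 0) = 1 := by
      simp
    have hendm : (m.choose m : ℝ) * ((m:ℝ)/m) ^ m * (1 - (m:ℝ)/m) ^ (m - m) = 1 := by
      rw [Nat.choose_self, Nat.sub_self, div_self hm0.ne', pow_zero]
      norm_num
    rw [hend0, hendm]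
    -- now : 1 + middle-sum + 1 ≤ 2 √m
    have hs : (2.23:ℝ) ≤ Real.sqrt m := by
      apply (Real.le_sqrt (by norm_num) (by positivity)).mpr
      have : (5:ℝ) ≤ (m:ℝ) := by exact_mod_cast h5
      nlinarith
    have hu : (2.5066:ℝ) ≤ Real.sqrt (2*π) := by
      apply (Real.le_sqrt (by norm_num) (by positivity)).mpr
      have hπ : (3.141592:ℝ) < π := Real.pi_gt_d6
      norm_num
      nlinarith [hπ]
    have hmid2 : Real.sqrt m / Real.sqrt (2*π) * (4 - 2.82/Real.sqrt m)
        = (4*Real.sqrt m - 2.82) / Real.sqrt (2*π) := by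
      field_simp
    have hnum : (4*Real.sqrt m - 2.82) / Real.sqrt (2*π)
        ≤ (4*Real.sqrt m - 2.82) / 2.5066 := by
      apply div_le_div_of_nonneg_left _ (by norm_num) hu
      · linarith
    have final : 2 + (4*Real.sqrt m - 2.82) / 2.5066 ≤ 2 * Real.sqrt m := by
      have h1 : (4*Real.sqrt m - 2.82) / 2.5066
          = (4/2.5066)*Real.sqrt m - 2.82/2.5066 := by ring
      rw [h1]
      nlinarith [hs]
    calc 1 + ∑ k ∈ Finset.Ico 1 m, (m.choose k : ℝ) * ((k:ℝ)/m)^k * (1 - (k:ℝ)/m)^(m-k) + 1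
        ≤ 1 + Real.sqrt m / Real.sqrt (2*π) * (4 - 2.82/Real.sqrt m) + 1 := by linarith
      _ = 2 + (4*Real.sqrt m - 2.82) / Real.sqrt (2*π) := by rw [hmid2]; ring
      _ ≤ 2 + (4*Real.sqrt m - 2.82) / 2.5066 := by linarith
      _ ≤ 2 * Real.sqrt m := final
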